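/- arXiv:1401.7288 — 7 statements merged into one kernel-verified Lean document; each statement's English description precedes it below -/
import Mathlib

section
/- For every real number z with 0 < z < 1, it holds that z(3 − 3z + z²) + (−3 + 2z + 2z² − 2z³)·ln(1 + z) > 0. -/
open Real Set

lemma aux_hasDeriv (x : ℝ) (hx : 0 ≤ x) :
    HasDerivAt (fun t : ℝ => t*(t+2)/(2*(t+1)) - Real.log (1+t))
      (x^2/(2*(x+1)^2)) x := by
  have hx1 : (0:ℝ) < 1 + x := by linarith
  have h1 : HasDerivAt (fun t : ℝ => t*(t+2)) (2*x+2) x := by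
    have := ((hasDerivAt_id x).mul ((hasDerivAt_id x).add_const 2))
    refine this.congr_deriv ?_
    simp; ring
  have h2 : HasDerivAt (fun t : ℝ => 2*(t+1)) 2 x := by
    simpa using ((hasDerivAt_id x).add_const 1).const_mul 2
  have hden : 2*(x+1) ≠ 0 := by positivity
  have hq := h1.div h2 hden
  have h3 : HasDerivAt (fun t : ℝ => Real.log (1+t)) (1/(1+x)) x := by
    have := (Real.hasDerivAt_log (ne_of_gt hx1)).comp x
      ((hasDerivAt_id x).const_add 1)
    simpa [one_div, Function.comp_def] using this
  have := hq.sub h3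
  refine this.congr_deriv ?_
  field_simp
  ring

lemma log_bound (z : ℝ) (hz : 0 ≤ z) : Real.log (1+z) ≤ z*(z+2)/(2*(z+1)) := by
  set g : ℝ → ℝ := fun t => t*(t+2)/(2*(t+1)) - Real.log (1+t) with hg
  have hmono : MonotoneOn g (Ici (0:ℝ)) := by
    apply monotoneOn_of_deriv_nonneg (convex_Ici 0)
    · apply ContinuousOn.sub
      · apply ContinuousOn.div (by fun_prop) (by fun_prop)
        intro x hx
        simp only [mem_Ici] at hx
        positivity
      · apply ContinuousOn.log (by fun_prop)
        intro x hx
        simp only [mem_Ici] at hx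
        positivity
    · intro x hx
      rw [interior_Ici] at hx
      simp only [mem_Ioi] at hx
      exact (aux_hasDeriv x hx.le).differentiableAt.differentiableWithinAt
    · intro x hx
      rw [interior_Ici] at hx
      simp only [mem_Ioi] at hx
      rw [(aux_hasDeriv x hx.le).deriv]
      positivity
  have h0 : g 0 ≤ g z := hmono (by simp) (by simpa using hz) hz
  simp only [hg] at h0
  norm_num at h0
  linarith

theorem stmt_0 (z : ℝ) (hz0 : 0 < z) (hz1 : z < 1) :
    z * (3 - 3*z + z^2) + (-3 + 2*z + 2*z^2 - 2*z^3) * Real.log (1 + z) > 0 := by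
  have hL := log_bound z hz0.le
  have hz1' : (0:ℝ) < 2*(z+1) := by linarith
  have hL' : 2*(z+1)*Real.log (1+z) ≤ z*(z+2) := by
    have h := mul_le_mul_of_nonneg_left hL hz1'.le
    have heq : 2*(z+1)*(z*(z+2)/(2*(z+1))) = z*(z+2) := by
      field_simp
    linarith [h, heq.le, heq.ge]
  have hc : (0:ℝ) ≤ 3 - 2*z - 2*z^2 + 2*z^3 := by nlinarith
  have H : (3 - 2*z - 2*z^2 + 2*z^3) * (z*(z+2) - 2*(z+1)*Real.log (1+z)) ≥ 0 :=
    mul_nonneg hc (by linarith)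
  have key : z * (3 - 3*z + z^2) * (2*(z+1)) + (-3 + 2*z + 2*z^2 - 2*z^3) * (z*(z+2)) > 0 := by
    nlinarith [mul_pos hz0 hz0, mul_pos (mul_pos hz0 hz0) hz0,
      mul_pos (mul_pos (mul_pos hz0 hz0) hz0) (mul_pos hz0 (by nlinarith : (0:ℝ) < 1 - z^2))]
  have big : (z * (3 - 3*z + z^2) + (-3 + 2*z + 2*z^2 - 2*z^3) * Real.log (1 + z)) * (2*(z+1)) > 0 := by
    nlinarith [H, key]
  by_contra h
  push_neg at h
  nlinarith [big, hz1']
end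

section
/- For every real number z with 0 < z < 1, it holds that z(3 − 3z + z²) + (−3 + 2z + 2z² − 2z³)·ln(1 + z) > (1/6)·z²·(3 + 6z − 14z² + 10z³ − 4z⁴). -/
theorem stmt_3 (z : ℝ) (hz0 : 0 < z) (hz1 : z < 1) :
    z * (3 - 3*z + z^2) + (-3 + 2*z + 2*z^2 - 2*z^3) * Real.log (1 + z)
      > (1/6) * z^2 * (3 + 6*z - 14*z^2 + 10*z^3 - 4*z^4) := by
  have hu0 : (0:ℝ) ≤ z - z^2/2 + z^3/3 := by nlinarith
  have hsum := Real.sum_le_exp_of_nonneg hu0 4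
  have hsum' : 1 + (z - z^2/2 + z^3/3) + (z - z^2/2 + z^3/3)^2/2
      + (z - z^2/2 + z^3/3)^3/6 ≤ Real.exp (z - z^2/2 + z^3/3) := by
    have h2 : (Finset.range 4).sum (fun i => (z - z^2/2 + z^3/3) ^ i / (Nat.factorial i))
        = 1 + (z - z^2/2 + z^3/3) + (z - z^2/2 + z^3/3)^2/2 + (z - z^2/2 + z^3/3)^3/6 := by
      simp [Finset.sum_range_succ, Nat.factorial]
    linarith [h2 ▸ hsum]
  have hz2 : z^2 ≤ 1 := by nlinarith
  have hz4 : z^4 ≤ z^2 := by nlinarith [sq_nonneg z, sq_nonneg (z^2 - z)]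
  have hlt : 1 + z < 1 + (z - z^2/2 + z^3/3) + (z - z^2/2 + z^3/3)^2/2
      + (z - z^2/2 + z^3/3)^3/6 := by
    have hp4 : 0 < z^4 := pow_pos hz0 4
    have hp5 : 0 < z^5 := pow_pos hz0 5
    nlinarith [mul_pos hp4 hz0, mul_le_of_le_one_right (le_of_lt hp4) (le_of_lt hz1),
      mul_nonneg (le_of_lt hp4) (sq_nonneg z), mul_le_mul_of_nonneg_left hz2 (le_of_lt hp4),
      mul_le_mul_of_nonneg_left hz4 (le_of_lt hp4)]
  have hexp : 1 + z < Real.exp (z - z^2/2 + z^3/3) := lt_of_lt_of_le hlt hsum'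
  have hlog : Real.log (1 + z) < z - z^2/2 + z^3/3 := by
    calc Real.log (1 + z) < Real.log (Real.exp (z - z^2/2 + z^3/3)) :=
          Real.log_lt_log (by linarith) hexp
      _ = z - z^2/2 + z^3/3 := Real.log_exp _
  have hf : (-3 + 2*z + 2*z^2 - 2*z^3) < 0 := by nlinarith
  have hprod : (-3 + 2*z + 2*z^2 - 2*z^3) * (Real.log (1+z) - (z - z^2/2 + z^3/3)) > 0 :=
    mul_pos_of_neg_of_neg hf (by linarith)
  nlinarith [hprod]
end

section
/- For every real number z with 0 < z < 1, it holds that (3z/4)·(4 − 8z² + 5z³) + (3 − 2z − 2z³ + 2z⁴)·ln( (1 − z) / (1 − z³)² ) > 0. -/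
private lemma aux_R_small (z : ℝ) (hz0 : 0 < z) (hc : z ≤ 11/20) :
    (0:ℝ) < 1/2 + 5/3*z^2 - 11/10*z^3 - 38/5*z^4 + 113/18*z^5 - 1/10*z^6
      - 232/45*z^7 + 106/45*z^8 + 24/5*z^10 - 24/5*z^11 := by
  have p2 : z^2 ≤ (11/20)^2 := by nlinarith
  have p3 : z^3 ≤ (11/20)*z^2 := by nlinarith
  have p4 : z^4 ≤ (11/20)^2*z^2 := by nlinarith
  have p6 : z^6 ≤ (11/20)^4*z^2 := by nlinarith [p4, sq_nonneg (z^2)]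
  have p7 : z^7 ≤ (11/20)^5*z^2 := by nlinarith [p6]
  have p11 : z^11 ≤ (11/20)^9*z^2 := by nlinarith [p7, pow_pos hz0 7, pow_pos hz0 4]
  have q5 : (0:ℝ) < z^5 := pow_pos hz0 5
  have q8 : (0:ℝ) < z^8 := pow_pos hz0 8
  have q10 : (0:ℝ) < z^10 := pow_pos hz0 10
  nlinarith [p2, p3, p4, p6, p7, p11, q5, q8, q10, sq_nonneg z]

private lemma aux_key_small (z : ℝ) (hz0 : 0 < z) (hc : z ≤ 11/20) :
    (3*z/4) * (4 - 8*z^2 + 5*z^3)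
      + (3 - 2*z - 2*z^3 + 2*z^4) *
        (-(z + z^2/2 + z^3/3 + z^4/4 + z^5/5) - (20/9) * z^6
          + 2*(z^3 + z^6/2) - (12/5) * z^9) > 0 := by
  nlinarith [mul_pos (mul_pos hz0 hz0) (aux_R_small z hz0 hc)]

private lemma aux_R_large (z : ℝ) (hz0 : 0 < z) (hc : 11/20 ≤ z) (hz1 : z < 1) :
    (0:ℝ) < -1 - z + 27/4*z^2 + z^3 - 6*z^4 + 2*z^7 := by
  nlinarith [mul_pos hz0 hz0, sq_nonneg (z - 11/20), sq_nonneg (1 - z),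
    mul_nonneg (sub_nonneg.mpr hc) (sub_nonneg.mpr hz1.le),
    mul_nonneg (mul_nonneg (sub_nonneg.mpr hc) (sub_nonneg.mpr hc)) (sub_nonneg.mpr hz1.le),
    mul_nonneg (mul_nonneg (sub_nonneg.mpr hc) (sub_nonneg.mpr hz1.le)) (sub_nonneg.mpr hz1.le),
    pow_pos hz0 3, pow_pos hz0 4, pow_pos hz0 7]

private lemma aux_key_large (z : ℝ) (hz0 : 0 < z) (hc : 11/20 ≤ z) (hz1 : z < 1) :
    (3*z/4) * (4 - 8*z^2 + 5*z^3)
      + (3 - 2*z - 2*z^3 + 2*z^4) * (1 - (1 - z) * (1 + z + z^2)^2) > 0 := by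
  nlinarith [mul_pos (mul_pos hz0 hz0) (aux_R_large z hz0 hc hz1)]

theorem stmt_4 (z : ℝ) (hz0 : 0 < z) (hz1 : z < 1) :
    (3*z/4) * (4 - 8*z^2 + 5*z^3)
      + (3 - 2*z - 2*z^3 + 2*z^4) * Real.log ((1 - z) / (1 - z^3)^2) > 0 := by
  have h1z : (0:ℝ) < 1 - z := by linarith
  have hz3 : z^3 < 1 := pow_lt_one₀ hz0.le hz1 (by norm_num)
  have h1z3 : (0:ℝ) < 1 - z^3 := by nlinarith
  have hg : (0:ℝ) < 3 - 2*z - 2*z^3 + 2*z^4 := by nlinarith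
  rcases le_or_gt z (11/20) with hc | hc
  · -- small z : use Taylor bounds on log
    have hlog : Real.log ((1 - z) / (1 - z^3)^2)
        = Real.log (1 - z) - 2 * Real.log (1 - z^3) := by
      rw [Real.log_div h1z.ne' (by positivity), Real.log_pow]
      push_cast; ring
    have hb1 := Real.abs_log_sub_add_sum_range_le (x := z)
      (by rw [abs_of_pos hz0]; linarith) 5
    have hb2 := Real.abs_log_sub_add_sum_range_le (x := z^3)
      (by rw [abs_of_pos (by positivity)]; linarith) 2
    rw [abs_of_pos hz0] at hb1
    rw [abs_of_pos (show (0:ℝ) < z^3 by positivity)] at hb2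
    simp [Finset.sum_range_succ] at hb1 hb2
    rw [abs_le] at hb1 hb2
    have e1 : z^6 / (1 - z) ≤ (20/9) * z^6 := by
      rw [div_le_iff₀ h1z]
      nlinarith [pow_pos hz0 6]
    have e2 : (z^3)^3 / (1 - z^3) ≤ (6/5) * z^9 := by
      rw [div_le_iff₀ h1z3]
      have h3 : z^3 ≤ (11/20)^3 := by
        apply pow_le_pow_left₀ hz0.le hc
      nlinarith [pow_pos hz0 9]
    have hA : Real.log (1 - z) ≥
        -(z + z^2/2 + z^3/3 + z^4/4 + z^5/5) - (20/9) * z^6 := by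
      have h := hb1.1
      nlinarith [e1]
    have hB : Real.log (1 - z^3) ≤ -(z^3 + z^6/2) + (6/5) * z^9 := by
      have h := hb2.2
      nlinarith [e2]
    have hBnd : Real.log (1 - z) - 2 * Real.log (1 - z^3) ≥
        -(z + z^2/2 + z^3/3 + z^4/4 + z^5/5) - (20/9) * z^6
          + 2*(z^3 + z^6/2) - (12/5) * z^9 := by linarith
    rw [hlog]
    have key := aux_key_small z hz0 hc
    nlinarith [mul_le_mul_of_nonneg_left hBnd hg.le]
  · -- large z : log x ≤ x - 1
    have harg : (1 - z) / (1 - z^3)^2 = ((1 - z) * (1 + z + z^2)^2)⁻¹ := by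
      have h : (1 - z^3)^2 = (1 - z) * ((1 - z) * (1 + z + z^2)^2) := by ring
      rw [h, div_mul_cancel_left₀ h1z.ne']
    rw [harg, Real.log_inv]
    have hu : (0:ℝ) < (1 - z) * (1 + z + z^2)^2 := by positivity
    have hlu : Real.log ((1 - z) * (1 + z + z^2)^2)
        ≤ (1 - z) * (1 + z + z^2)^2 - 1 := Real.log_le_sub_one_of_pos hu
    have key := aux_key_large z hz0 hc.le hz1
    nlinarith [mul_le_mul_of_nonneg_left hlu hg.le]
end

section
/- Fix integers d_l ≥ 2, d_r ≥ 3, d_g ≥ 2 and a real β > 0. For every x with 0 < x < 1 and every β > 0, the dual potential satisfies U⊥(x, x₂⊥(x); ε⊥(x)) > 0 when (d_l, d_r, d_g) = (2, 3, 3), i.e. (writing e^{−βx₂} = exp(−β·x₂)): U⊥(x₁,x₂;ε) = 3/β − (3/β)(1−x₁)²·e^{−βx₂} − (2/β)·(1 − (1−x₁)·e^{−βx₂})³ − ε·(1 − (1−x₁)²·e^{−βx₂})³ − (6/β)·x₁(1−x₁)·e^{−βx₂} − 3·x₂(1−x₁)²·e^{−βx₂} is strictly positive at x₁ = x, x₂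 = x₂⊥(x) = −(1/β)·ln((1 − √x)/(1 − x)) and ε = ε⊥(x) = x₂⊥(x) / (1 − (1−x)²·exp(−β·x₂⊥(x)))². -/
lemma log_le_bound233 {s : ℝ} (hs : 0 ≤ s) :
    Real.log (1 + s) ≤ (s^2 + 2*s) / (2*(1+s)) := by
  have h1 : (0:ℝ) < 1 + s := by linarith
  set t := (s^2 + 2*s) / (2*(1+s)) with ht
  have ht0 : 0 ≤ t := by positivity
  have e : t * (2*(1+s)) = s^2 + 2*s := div_mul_cancel₀ _ (by positivity)
  have key : 1 + s ≤ 1 + t + t^2/2 := by nlinarith [sq_nonneg (s*s), sq_nonneg s]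
  have hexp : 1 + t + t^2/2 ≤ Real.exp t := Real.quadratic_le_exp_of_nonneg ht0
  rw [Real.log_le_iff_le_exp h1]
  linarith

/-- Potential function of the dual of the `(d_l = 2, d_r = 3, d_g = 3)`
precoded-rateless code with parameter `β > 0`. -/
noncomputable def dualPotential233 (β x₁ x₂ ε : ℝ) : ℝ :=
  3/β - (3/β) * (1 - x₁)^2 * Real.exp (-β*x₂)
    - (2/β) * (1 - (1 - x₁) * Real.exp (-β*x₂))^3
    - ε * (1 - (1 - x₁)^2 * Real.exp (-β*x₂))^3
    - (6/β) * x₁ * (1 - x₁) * Real.exp (-β*x₂)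
    - 3 * x₂ * (1 - x₁)^2 * Real.exp (-β*x₂)

/-- Second coordinate of the nontrivial DE fixed points of the dual code. -/
noncomputable def x₂perp233 (β x : ℝ) : ℝ :=
  -(1/β) * Real.log ((1 - Real.sqrt x) / (1 - x))

/-- Erasure-probability coordinate of the nontrivial DE fixed points of the dual code. -/
noncomputable def εperp233 (β x : ℝ) : ℝ :=
  x₂perp233 β x / (1 - (1 - x)^2 * Real.exp (-β * x₂perp233 β x))^2

theorem stmt_10 (β : ℝ) (hβ : 0 < β) (x : ℝ) (hx0 : 0 < x) (hx1 : x < 1) :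
    0 < dualPotential233 β x (x₂perp233 β x) (εperp233 β x) := by
  set s := Real.sqrt x with hs
  have hs0 : 0 < s := Real.sqrt_pos.mpr hx0
  have hsx : s^2 = x := Real.sq_sqrt hx0.le
  have hs1 : s < 1 := by nlinarith
  have h1s : (0:ℝ) < 1 + s := by linarith
  set L := Real.log (1+s) with hL
  have hL0 : 0 < L := Real.log_pos (by linarith)
  have hratio : (1 - s) / (1 - x) = (1+s)⁻¹ := by
    rw [← hsx]
    rw [show (1:ℝ) - s^2 = (1-s)*(1+s) by ring]
    rw [div_mul_eq_div_div, div_self (by linarith : (1:ℝ)-s ≠ 0)]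
    exact one_div _
  have hx2 : x₂perp233 β x = L / β := by
    unfold x₂perp233
    rw [← hs, hratio, Real.log_inv, hL]
    ring
  have hEe : Real.exp (-β * x₂perp233 β x) = (1+s)⁻¹ := by
    have harg : -β * (L/β) = -L := by field_simp
    rw [hx2, harg]
    rw [Real.exp_neg, hL, Real.exp_log h1s]
  have hD : 1 - (1 - x)^2 * (1+s)⁻¹ = s + s^2 - s^3 := by
    rw [← hsx]
    field_simp
    ring
  have hP : (0:ℝ) < s + s^2 - s^3 := by nlinarith
  have hU : dualPotential233 β x (x₂perp233 β x) (εperp233 β x)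
      = (3*s - 3*s^2 + s^3 - L*(3 - 2*s - 2*s^2 + 2*s^3))/β := by
    unfold dualPotential233 εperp233
    rw [hEe, hx2, hD, ← hsx]
    field_simp
    ring
  rw [hU]
  have hc : (0:ℝ) < 3 - 2*s - 2*s^2 + 2*s^3 := by nlinarith
  have hlb : L ≤ (s^2 + 2*s) / (2*(1+s)) := log_le_bound233 hs0.le
  have hfrac : (s^2 + 2*s) / (2*(1+s)) * (3 - 2*s - 2*s^2 + 2*s^3) < 3*s - 3*s^2 + s^3 := by
    rw [div_mul_eq_mul_div, div_lt_iff₀ (by positivity)]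
    nlinarith [mul_pos hs0 hs0, mul_pos (pow_pos hs0 3) (show (0:ℝ) < 1 - s^2 by nlinarith)]
  have h2 : L * (3 - 2*s - 2*s^2 + 2*s^3) < 3*s - 3*s^2 + s^3 :=
    lt_of_le_of_lt (mul_le_mul_of_nonneg_right hlb hc.le) hfrac
  apply div_pos _ hβ
  linarith
end

section
/- Fix integers d_l ≥ 2, d_r ≥ 3, d_g ≥ 2 and a real β > 0. For every x with 0 < x < 1, the pair (x, x₂(x)) is a fixed point of the DE map T_{ε(x)}, i.e. T_{ε(x)}(x, x₂(x)) = (x, x₂(x)), where x₂(x) = x·(1 − (1−x)^{d_r−1}) and ε(x) = 1 + ln( x / (1 − (1−x)^{d_r−1})^{d_l−1} ) / ( β·(1 − x₂(x))^{d_g−1} ). -/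
/-- Density-evolution map of the `(d_l, d_r, d_g)` precoded-rateless code
with parameter `β > 0` over BEC(`ε`). -/
noncomputable def DEmap (dl dr dg : ℕ) (β ε : ℝ) (p : ℝ × ℝ) : ℝ × ℝ :=
  ((1 - (1 - p.1)^(dr-1))^(dl-1) * Real.exp (-β*(1-ε)*(1-p.2)^(dg-1)),
   (1 - (1 - p.1)^(dr-1))^dl * Real.exp (-β*(1-ε)*(1-p.2)^(dg-1)))

/-- Second coordinate of the nontrivial DE fixed-point curve. -/
noncomputable def x₂curve (dr : ℕ) (x : ℝ) : ℝ := x * (1 - (1 - x)^(dr-1))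

/-- Erasure-probability coordinate of the nontrivial DE fixed-point curve. -/
noncomputable def εcurve (dl dr dg : ℕ) (β x : ℝ) : ℝ :=
  1 + Real.log (x / (1 - (1 - x)^(dr-1))^(dl-1)) / (β * (1 - x₂curve dr x)^(dg-1))

theorem stmt_13 (dl dr dg : ℕ) (hdl : 2 ≤ dl) (hdr : 3 ≤ dr) (hdg : 2 ≤ dg)
    (β : ℝ) (hβ : 0 < β) (x : ℝ) (hx0 : 0 < x) (hx1 : x < 1) :
    DEmap dl dr dg β (εcurve dl dr dg β x) (x, x₂curve dr x) = (x, x₂curve dr x) := by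
  have h1x : (0:ℝ) < 1 - x := by linarith
  have hp : 0 < (1-x)^(dr-1) := pow_pos h1x _
  have hp1 : (1-x)^(dr-1) < 1 := pow_lt_one₀ h1x.le (by linarith) (by omega)
  have ha0 : 0 < 1 - (1-x)^(dr-1) := by linarith
  have ha1 : 1 - (1-x)^(dr-1) < 1 := by linarith
  have hA : 0 < (1 - (1-x)^(dr-1))^(dl-1) := pow_pos ha0 _
  have hx2 : x₂curve dr x = x * (1 - (1-x)^(dr-1)) := rfl
  have hx2lt : x * (1 - (1-x)^(dr-1)) < 1 := by nlinarith
  have h1x2 : 0 < 1 - x * (1 - (1-x)^(dr-1)) := by linarith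
  have hD : (0:ℝ) < β * (1 - x * (1 - (1-x)^(dr-1)))^(dg-1) :=
    mul_pos hβ (pow_pos h1x2 _)
  have hxa : 0 < x / (1 - (1-x)^(dr-1))^(dl-1) := div_pos hx0 hA
  have key : Real.exp (-β*(1 - εcurve dl dr dg β x)*(1 - x₂curve dr x)^(dg-1))
      = x / (1 - (1-x)^(dr-1))^(dl-1) := by
    rw [show (-β*(1 - εcurve dl dr dg β x)*(1 - x₂curve dr x)^(dg-1))
        = Real.log (x / (1 - (1-x)^(dr-1))^(dl-1)) from ?_, Real.exp_log hxa]
    unfold εcurve x₂curve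
    field_simp
    ring
  have hdl' : dl = (dl - 1) + 1 := by omega
  unfold DEmap
  simp only
  rw [key, Prod.mk.injEq]
  constructor
  · field_simp
  · rw [hx2, hdl', pow_succ]
    simp only [Nat.add_sub_cancel]
    field_simp
end

section
/- Fix integers d_l ≥ 2, d_r ≥ 3, d_g ≥ 2, a real β > 0 and ε ∈ [0,1]. If (x₁, x₂) ∈ [0,1]² is a fixed point of the DE map T_ε with 0 < x₁ < 1, then x₂ = x₁·(1 − (1−x₁)^{d_r−1}) and ε = 1 + ln( x₁ / (1 − (1−x₁)^{d_r−1})^{d_l−1} ) / ( β·(1 − x₂)^{d_g−1} ); that is, every nontrivial fixed point lies on the parametric curve (x, x₂(x); ε(x)). -/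
theorem stmt_14 (dl dr dg : ℕ) (hdl : 2 ≤ dl) (hdr : 3 ≤ dr) (hdg : 2 ≤ dg)
    (β : ℝ) (hβ : 0 < β) (ε : ℝ) (hε0 : 0 ≤ ε) (hε1 : ε ≤ 1)
    (x₁ x₂ : ℝ) (hx₁m : x₁ ∈ Set.Icc (0:ℝ) 1) (hx₂m : x₂ ∈ Set.Icc (0:ℝ) 1)
    (hfix : DEmap dl dr dg β ε (x₁, x₂) = (x₁, x₂))
    (hx₁0 : 0 < x₁) (hx₁1 : x₁ < 1) :
    x₂ = x₁ * (1 - (1 - x₁)^(dr-1)) ∧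
    ε = 1 + Real.log (x₁ / (1 - (1 - x₁)^(dr-1))^(dl-1))
          / (β * (1 - x₁ * (1 - (1 - x₁)^(dr-1)))^(dg-1)) := by
  set A : ℝ := 1 - (1 - x₁)^(dr-1) with hA
  set E : ℝ := Real.exp (-β*(1-ε)*(1-x₂)^(dg-1)) with hE
  have hfix' := hfix
  rw [DEmap, Prod.mk.injEq] at hfix'
  obtain ⟨h1, h2⟩ := hfix'
  have hAlt : (1 - x₁)^(dr-1) < 1 := by
    apply pow_lt_one₀ (by linarith) (by linarith) (by omega)
  have hA0 : 0 < A := by simp only [hA]; linarith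
  have hA1 : A ≤ 1 := by
    have : 0 ≤ (1 - x₁)^(dr-1) := pow_nonneg (by linarith) _
    simp only [hA]; linarith
  have hdl1 : dl = (dl - 1) + 1 := by omega
  simp only at h1 h2
  obtain ⟨k, hk⟩ : ∃ k, dl = k + 1 := ⟨dl - 1, by omega⟩
  have hk1 : dl - 1 = k := by omega
  rw [hk, pow_succ] at h2
  rw [hk1] at h1
  have hx2 : x₂ = x₁ * A := by
    rw [hA]; linear_combination (1 - (1 - x₁)^(dr-1)) * h1 - h2
  refine ⟨hx2, ?_⟩
  have hx2lt : x₂ < 1 := by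
    rw [hx2]
    calc x₁ * A ≤ x₁ * 1 := by
          apply mul_le_mul_of_nonneg_left hA1 hx₁0.le
      _ < 1 := by linarith
  have hApow : 0 < A^(dl-1) := pow_pos hA0 _
  have hEeq : E = x₁ / A^(dl-1) := by
    rw [hk1, eq_div_iff (by positivity : (A:ℝ)^k ≠ 0), hE, hA]
    linear_combination h1
  have hD : 0 < (1 - x₂)^(dg-1) := pow_pos (by linarith) _
  have hlog : -β*(1-ε)*(1-x₂)^(dg-1) = Real.log (x₁ / A^(dl-1)) := by
    rw [← hEeq, hE, Real.log_exp]
  rw [← hx2, ← hlog]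
  field_simp
  ring
end

section
/- Fix integers d_l ≥ 2, d_r ≥ 3, d_g ≥ 2, a real β > 0 and ε ∈ [0,1]. If (x₁, x₂) ∈ [0,1]² is a fixed point of the DE map T_ε of the (d_l, d_r, d_g) precoded-rateless code, then U(x₁, x₂; ε) = U⊥( (1−x₁)^{d_r−1}, (1−ε)·(1−x₂)^{d_g−1}; 1−ε ) + ε_Sha − ε, where ε_Sha = 1 − (d_g/β)·(1 − d_l/d_r). -/
/-- Potential function of the `(d_l, d_r, d_g)` precoded-rateless code. -/
noncomputable def potential (dl dr dg : ℕ) (β ε x₁ x₂ : ℝ) : ℝ :=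
  (dg:ℝ)*dl/(β*dr) + 1 - ε
    - ((dg:ℝ)*dl/(β*dr)) * (1 - x₁)^dr
    - (1 - ε) * (1 - x₂)^dg
    - ((dg:ℝ)/β) * (1 - (1 - x₁)^(dr-1))^dl * Real.exp (-β*(1-ε)*(1-x₂)^(dg-1))
    - ((dg:ℝ)*dl/β) * x₁ * (1 - x₁)^(dr-1)
    - (dg:ℝ) * (1 - ε) * x₂ * (1 - x₂)^(dg-1)

/-- Potential function of the dual of the `(d_l, d_r, d_g)` precoded-rateless code. -/
noncomputable def dualPotential (dl dr dg : ℕ) (β ε x₁ x₂ : ℝ) : ℝ :=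
  (dg:ℝ)/β - ((dg:ℝ)/β) * (1 - x₁)^dl * Real.exp (-β*x₂)
    - ((dg:ℝ)*dl/(β*dr)) * (1 - (1 - x₁)^(dl-1) * Real.exp (-β*x₂))^dr
    - ε * (1 - (1 - x₁)^dl * Real.exp (-β*x₂))^dg
    - ((dg:ℝ)*dl/β) * x₁ * (1 - x₁)^(dl-1) * Real.exp (-β*x₂)
    - (dg:ℝ) * x₂ * (1 - x₁)^dl * Real.exp (-β*x₂)

theorem stmt_16 (dl dr dg : ℕ) (hdl : 2 ≤ dl) (hdr : 3 ≤ dr) (hdg : 2 ≤ dg)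
    (β : ℝ) (hβ : 0 < β) (ε : ℝ) (hε0 : 0 ≤ ε) (hε1 : ε ≤ 1)
    (x₁ x₂ : ℝ) (hx₁m : x₁ ∈ Set.Icc (0:ℝ) 1) (hx₂m : x₂ ∈ Set.Icc (0:ℝ) 1)
    (hfix : DEmap dl dr dg β ε (x₁, x₂) = (x₁, x₂)) :
    potential dl dr dg β ε x₁ x₂
      = dualPotential dl dr dg β (1-ε) ((1-x₁)^(dr-1)) ((1-ε)*(1-x₂)^(dg-1))
        + (1 - ((dg:ℝ)/β) * (1 - (dl:ℝ)/dr)) - ε := by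
  simp only [DEmap, Prod.mk.injEq] at hfix
  obtain ⟨h1, h2⟩ := hfix
  simp only [potential, dualPotential]
  have hE : -β * ((1-ε)*(1-x₂)^(dg-1)) = -β*(1-ε)*(1-x₂)^(dg-1) := by ring
  rw [hE, h1, h2]
  linear_combination ((dg:ℝ)*dl/β*(1-x₁)^(dr-1)) * h1
    + ((dg:ℝ)*(1-ε)*(1-x₂)^(dg-1)) * h2
end
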